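/- Let p > 2, α, β > 1 with α + β = p, and a₁, a₂, b₁, b₂, d > 0. Define e(s,t) := a₁s² + a₂t² − b₁sᵖ − b₂tᵖ + d·sᵅtᵝ on V := (0,∞) × (0,∞), and assume that (1,1) is a critical point of e. If every critical point of e in V is a strict local maximum of e, then (1,1) is the only critical point of e in V and it is a global maximum of e on V, i.e., e(s,t) ≤ e(1,1) for all (s,t) ∈ V. -/

import Mathlib

open Set

/-- The function `e(s,t) = a₁s² + a₂t² − b₁sᵖ − b₂tᵖ + d sᵅ tᵝ` of the appendix. -/
noncomputable def eFun (a₁ a₂ b₁ b₂ d p α β : ℝ) (s t : ℝ) : ℝ :=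
  a₁ * s ^ 2 + a₂ * t ^ 2 - b₁ * s ^ p - b₂ * t ^ p + d * s ^ α * t ^ β

/-- The partial derivative `∂e/∂s`. -/
noncomputable def eFunDS (a₁ a₂ b₁ b₂ d p α β : ℝ) (s t : ℝ) : ℝ :=
  deriv (fun s' => eFun a₁ a₂ b₁ b₂ d p α β s' t) s

/-- The partial derivative `∂e/∂t`. -/
noncomputable def eFunDT (a₁ a₂ b₁ b₂ d p α β : ℝ) (s t : ℝ) : ℝ :=
  deriv (fun t' => eFun a₁ a₂ b₁ b₂ d p α β s t') t

lemma dsHasDeriv (a₁ a₂ b₁ b₂ d p α β : ℝ) {s : ℝ} (hs : 0 < s) (t : ℝ) :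
    HasDerivAt (fun s' => eFun a₁ a₂ b₁ b₂ d p α β s' t)
      (2 * a₁ * s - p * b₁ * s ^ (p - 1) + d * α * s ^ (α - 1) * t ^ β) s := by
  unfold eFun
  have h1 : HasDerivAt (fun s' : ℝ => s' ^ p) (p * s ^ (p - 1)) s :=
    Real.hasDerivAt_rpow_const (Or.inl hs.ne')
  have h2 : HasDerivAt (fun s' : ℝ => s' ^ α) (α * s ^ (α - 1)) s :=
    Real.hasDerivAt_rpow_const (Or.inl hs.ne')
  have h3 : HasDerivAt (fun s' : ℝ => s' ^ (2:ℕ)) (2 * s) s := by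
    simpa using (hasDerivAt_pow 2 s)
  have := (((((h3.const_mul a₁).add (hasDerivAt_const s (a₂ * t ^ 2))).sub
      (h1.const_mul b₁)).sub (hasDerivAt_const s (b₂ * t ^ p))).add
      (((h2.const_mul d)).mul_const (t ^ β)))
  exact this.congr_deriv (by ring)

lemma dtHasDeriv (a₁ a₂ b₁ b₂ d p α β : ℝ) (s : ℝ) {t : ℝ} (ht : 0 < t) :
    HasDerivAt (fun t' => eFun a₁ a₂ b₁ b₂ d p α β s t')
      (2 * a₂ * t - p * b₂ * t ^ (p - 1) + d * β * s ^ α * t ^ (β - 1)) t := by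
  unfold eFun
  have h1 : HasDerivAt (fun t' : ℝ => t' ^ p) (p * t ^ (p - 1)) t :=
    Real.hasDerivAt_rpow_const (Or.inl ht.ne')
  have h2 : HasDerivAt (fun t' : ℝ => t' ^ β) (β * t ^ (β - 1)) t :=
    Real.hasDerivAt_rpow_const (Or.inl ht.ne')
  have h3 : HasDerivAt (fun t' : ℝ => t' ^ (2:ℕ)) (2 * t) t := by
    simpa using (hasDerivAt_pow 2 t)
  have := (((((hasDerivAt_const t (a₁ * s ^ 2)).add (h3.const_mul a₂)).sub
      (hasDerivAt_const t (b₁ * s ^ p))).sub (h1.const_mul b₂)).add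
      ((h2.const_mul (d * s ^ α))))
  exact this.congr_deriv (by ring)

lemma dsFormula (a₁ a₂ b₁ b₂ d p α β : ℝ) {s : ℝ} (hs : 0 < s) (t : ℝ) :
    eFunDS a₁ a₂ b₁ b₂ d p α β s t
      = 2 * a₁ * s - p * b₁ * s ^ (p - 1) + d * α * s ^ (α - 1) * t ^ β :=
  (dsHasDeriv a₁ a₂ b₁ b₂ d p α β hs t).deriv

lemma dtFormula (a₁ a₂ b₁ b₂ d p α β : ℝ) (s : ℝ) {t : ℝ} (ht : 0 < t) :
    eFunDT a₁ a₂ b₁ b₂ d p α β s t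
      = 2 * a₂ * t - p * b₂ * t ^ (p - 1) + d * β * s ^ α * t ^ (β - 1) :=
  (dtHasDeriv a₁ a₂ b₁ b₂ d p α β s ht).deriv

/-- `F(s)` such that `∂e/∂s(s,t)=0` iff `t^β = F(s)`. -/
noncomputable def Fc (a₁ b₁ d p α : ℝ) (s : ℝ) : ℝ :=
  (p * b₁ * s ^ (p - α) - 2 * a₁ * s ^ (2 - α)) / (d * α)

noncomputable def Fd (a₁ b₁ d p α : ℝ) (s : ℝ) : ℝ :=
  (p * b₁ * ((p - α) * s ^ (p - α - 1)) - 2 * a₁ * ((2 - α) * s ^ (2 - α - 1))) / (d * α)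

noncomputable def fc (a₁ b₁ d p α β : ℝ) (s : ℝ) : ℝ :=
  (Fc a₁ b₁ d p α s) ^ (1 / β)

noncomputable def fdv (a₁ b₁ d p α β : ℝ) (s : ℝ) : ℝ :=
  1 / β * Fc a₁ b₁ d p α s ^ (1 / β - 1) * Fd a₁ b₁ d p α s

/-- The domain of the curve. -/
def Dset (a₁ b₁ p : ℝ) : Set ℝ := {s | 0 < s ∧ 2 * a₁ < p * b₁ * s ^ (p - 2)}

/-- `Φ(s) = ∂e/∂t (s, fc s)`. -/
noncomputable def Pc (a₁ a₂ b₁ b₂ d p α β : ℝ) (s : ℝ) : ℝ :=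
  2 * a₂ * fc a₁ b₁ d p α β s - p * b₂ * fc a₁ b₁ d p α β s ^ (p - 1)
    + d * β * s ^ α * fc a₁ b₁ d p α β s ^ (β - 1)

section Aux
variable {a₁ a₂ b₁ b₂ d p α β : ℝ}

lemma mem_D_upward (ha₁ : 0 < a₁) (hb₁ : 0 < b₁) (hp : 2 < p) {s s' : ℝ}
    (h : s ∈ Dset a₁ b₁ p) (hss' : s ≤ s') : s' ∈ Dset a₁ b₁ p := by
  obtain ⟨hs, h2⟩ := h
  have hpow : s ^ (p - 2) ≤ s' ^ (p - 2) := Real.rpow_le_rpow hs.le hss' (by linarith)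
  have hpb : (0:ℝ) < p * b₁ := by positivity
  exact ⟨lt_of_lt_of_le hs hss', lt_of_lt_of_le h2 (by nlinarith)⟩

lemma Fc_pos (ha₁ : 0 < a₁) (hd : 0 < d) (hα : 1 < α) {s : ℝ}
    (h : s ∈ Dset a₁ b₁ p) : 0 < Fc a₁ b₁ d p α s := by
  obtain ⟨hs, h2⟩ := h
  have key : p * b₁ * s ^ (p - α) - 2 * a₁ * s ^ (2 - α)
      = (p * b₁ * s ^ (p - 2) - 2 * a₁) * s ^ (2 - α) := by
    rw [show p - α = (p - 2) + (2 - α) by ring, Real.rpow_add hs]; ring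
  have h3 : (0:ℝ) < s ^ (2 - α) := Real.rpow_pos_of_pos hs _
  have : 0 < p * b₁ * s ^ (p - α) - 2 * a₁ * s ^ (2 - α) := by
    rw [key]; exact mul_pos (by linarith) h3
  exact div_pos this (by positivity)

lemma fc_pos (ha₁ : 0 < a₁) (hd : 0 < d) (hα : 1 < α) {s : ℝ}
    (h : s ∈ Dset a₁ b₁ p) : 0 < fc a₁ b₁ d p α β s :=
  Real.rpow_pos_of_pos (Fc_pos ha₁ hd hα h) _

lemma fc_pow (ha₁ : 0 < a₁) (hd : 0 < d) (hα : 1 < α) (hβ : 1 < β) {s : ℝ}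
    (h : s ∈ Dset a₁ b₁ p) : fc a₁ b₁ d p α β s ^ β = Fc a₁ b₁ d p α s := by
  unfold fc
  rw [← Real.rpow_mul (Fc_pos ha₁ hd hα h).le, one_div_mul_cancel (by linarith : β ≠ 0),
    Real.rpow_one]

lemma curve_eq (ha₁ : 0 < a₁) (hd : 0 < d) (hα : 1 < α) (hβ : 1 < β) {s : ℝ}
    (h : s ∈ Dset a₁ b₁ p) :
    2 * a₁ * s - p * b₁ * s ^ (p - 1) + d * α * s ^ (α - 1) * fc a₁ b₁ d p α β s ^ β = 0 := by
  rw [fc_pow ha₁ hd hα hβ h]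
  have hs := h.1
  have h1 : s ^ (α - 1) * s ^ (p - α) = s ^ (p - 1) := by
    rw [← Real.rpow_add hs]; congr 1; ring
  have h2 : s ^ (α - 1) * s ^ (2 - α) = s := by
    rw [← Real.rpow_add hs]; norm_num
  unfold Fc
  have hda : d * α ≠ 0 := by positivity
  field_simp
  linear_combination (p * b₁) * h1 - (2 * a₁) * h2
end Aux

section Aux2
variable {a₁ a₂ b₁ b₂ d p α β : ℝ}

lemma Fc_hasDeriv (hd : 0 < d) (hα : 1 < α) {s : ℝ} (hs : 0 < s) :
    HasDerivAt (Fc a₁ b₁ d p α) (Fd a₁ b₁ d p α s) s := by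
  have h1 : HasDerivAt (fun x : ℝ => x ^ (p - α)) ((p - α) * s ^ (p - α - 1)) s :=
    Real.hasDerivAt_rpow_const (Or.inl hs.ne')
  have h2 : HasDerivAt (fun x : ℝ => x ^ (2 - α)) ((2 - α) * s ^ (2 - α - 1)) s :=
    Real.hasDerivAt_rpow_const (Or.inl hs.ne')
  exact ((h1.const_mul (p * b₁)).sub (h2.const_mul (2 * a₁))).div_const (d * α)

lemma Fd_pos (ha₁ : 0 < a₁) (hb₁ : 0 < b₁) (hd : 0 < d) (hp : 2 < p) (hα : 1 < α) (hβ : 1 < β)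
    (hαβ : α + β = p) {s : ℝ} (h : s ∈ Dset a₁ b₁ p) : 0 < Fd a₁ b₁ d p α s := by
  obtain ⟨hs, h2⟩ := h
  have e1 : s ^ (p - α - 1) = s ^ (p - 2) * s ^ (2 - α - 1) := by
    rw [← Real.rpow_add hs]; congr 1; ring
  have h3 : (0:ℝ) < s ^ (2 - α - 1) := Real.rpow_pos_of_pos hs _
  have key : p * b₁ * ((p - α) * s ^ (p - α - 1)) - 2 * a₁ * ((2 - α) * s ^ (2 - α - 1))
      = (β * (p * b₁ * s ^ (p - 2)) - 2 * a₁ * (2 - α)) * s ^ (2 - α - 1) := by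
    rw [e1, show p - α = β by linarith]; ring
  have hbr : 0 < β * (p * b₁ * s ^ (p - 2)) - 2 * a₁ * (2 - α) := by
    have hb2 : β * (2 * a₁) < β * (p * b₁ * s ^ (p - 2)) :=
      (mul_lt_mul_iff_right₀ (by linarith : (0:ℝ) < β)).2 h2
    nlinarith
  unfold Fd
  rw [key]
  positivity

lemma fc_hasDeriv (ha₁ : 0 < a₁) (hd : 0 < d) (hα : 1 < α) {s : ℝ}
    (h : s ∈ Dset a₁ b₁ p) :
    HasDerivAt (fc a₁ b₁ d p α β) (fdv a₁ b₁ d p α β s) s := by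
  have hF := Fc_hasDeriv (a₁ := a₁) (b₁ := b₁) (p := p) hd hα h.1
  have := hF.rpow_const (p := 1 / β) (Or.inl (Fc_pos ha₁ hd hα h).ne')
  exact this.congr_deriv (by unfold fdv; ring)

lemma fdv_pos (ha₁ : 0 < a₁) (hb₁ : 0 < b₁) (hd : 0 < d) (hp : 2 < p) (hα : 1 < α) (hβ : 1 < β)
    (hαβ : α + β = p) {s : ℝ} (h : s ∈ Dset a₁ b₁ p) : 0 < fdv a₁ b₁ d p α β s := by
  have h1 := Fc_pos ha₁ hd hα h
  have h2 := Fd_pos (β := β) ha₁ hb₁ hd hp hα hβ hαβ h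
  have h3 : (0:ℝ) < 1 / β := by positivity
  have h4 : (0:ℝ) < Fc a₁ b₁ d p α s ^ (1 / β - 1) := Real.rpow_pos_of_pos h1 _
  unfold fdv; positivity

lemma Pc_eq_dT (ha₁ : 0 < a₁) (hd : 0 < d) (hα : 1 < α) {s : ℝ}
    (h : s ∈ Dset a₁ b₁ p) :
    eFunDT a₁ a₂ b₁ b₂ d p α β s (fc a₁ b₁ d p α β s) = Pc a₁ a₂ b₁ b₂ d p α β s :=
  dtFormula a₁ a₂ b₁ b₂ d p α β s (fc_pos ha₁ hd hα h)

lemma dS_zero (ha₁ : 0 < a₁) (hd : 0 < d) (hα : 1 < α) (hβ : 1 < β) {s : ℝ}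
    (h : s ∈ Dset a₁ b₁ p) :
    eFunDS a₁ a₂ b₁ b₂ d p α β s (fc a₁ b₁ d p α β s) = 0 := by
  rw [dsFormula a₁ a₂ b₁ b₂ d p α β h.1]
  exact curve_eq ha₁ hd hα hβ h

lemma crit_mem (ha₁ : 0 < a₁) (hb₁ : 0 < b₁) (hd : 0 < d) (hp : 2 < p) (hα : 1 < α)
    (hβ : 1 < β) {s t : ℝ} (hs : 0 < s) (ht : 0 < t)
    (hS : eFunDS a₁ a₂ b₁ b₂ d p α β s t = 0) :
    s ∈ Dset a₁ b₁ p ∧ t = fc a₁ b₁ d p α β s := by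
  rw [dsFormula a₁ a₂ b₁ b₂ d p α β hs] at hS
  have htβ : (0:ℝ) < t ^ β := Real.rpow_pos_of_pos ht _
  have hsα : (0:ℝ) < s ^ (α - 1) := Real.rpow_pos_of_pos hs _
  have e1 : s ^ (p - 1) = s ^ (p - 2) * s := by
    rw [show p - 1 = (p - 2) + 1 by ring, Real.rpow_add hs, Real.rpow_one]
  have hprod : 0 < d * α * s ^ (α - 1) * t ^ β := by
    have hα0 : (0:ℝ) < α := by linarith
    positivity
  have hpos : 0 < p * b₁ * s ^ (p - 1) - 2 * a₁ * s := by linarith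
  have hmem : s ∈ Dset a₁ b₁ p := by
    refine ⟨hs, ?_⟩
    rw [e1] at hpos
    have := (div_pos hpos hs)
    nlinarith
  refine ⟨hmem, ?_⟩
  -- t ^ β = Fc s
  have htF : t ^ β = Fc a₁ b₁ d p α s := by
    have h1 : s ^ (α - 1) * s ^ (p - α) = s ^ (p - 1) := by
      rw [← Real.rpow_add hs]; congr 1; ring
    have h2 : s ^ (α - 1) * s ^ (2 - α) = s := by
      rw [← Real.rpow_add hs]; norm_num
    have hda : d * α ≠ 0 := by
      have hα0 : (0:ℝ) < α := by linarith
      positivity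
    have hmul : s ^ (α - 1) * (t ^ β * (d * α))
        = s ^ (α - 1) * (p * b₁ * s ^ (p - α) - 2 * a₁ * s ^ (2 - α)) := by
      linear_combination hS - (p * b₁) * h1 + (2 * a₁) * h2
    unfold Fc
    rw [eq_div_iff hda]
    exact mul_left_cancel₀ hsα.ne' hmul
  have : t = (t ^ β) ^ (1 / β) := by
    rw [← Real.rpow_mul ht.le, mul_one_div, div_self (by linarith : β ≠ 0), Real.rpow_one]
  rw [this, htF]; rfl

lemma Pc_contAt (ha₁ : 0 < a₁) (hd : 0 < d) (hα : 1 < α) {s : ℝ}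
    (h : s ∈ Dset a₁ b₁ p) : ContinuousAt (Pc a₁ a₂ b₁ b₂ d p α β) s := by
  have hfc : ContinuousAt (fc a₁ b₁ d p α β) s := (fc_hasDeriv ha₁ hd hα h).continuousAt
  have hfcpos := fc_pos (β := β) ha₁ hd hα h
  have c1 : ContinuousAt (fun x => fc a₁ b₁ d p α β x ^ (p - 1)) s :=
    (Real.continuousAt_rpow_const _ _ (Or.inl hfcpos.ne')).comp hfc
  have c2 : ContinuousAt (fun x => fc a₁ b₁ d p α β x ^ (β - 1)) s :=
    (Real.continuousAt_rpow_const _ _ (Or.inl hfcpos.ne')).comp hfc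
  have c3 : ContinuousAt (fun x : ℝ => x ^ α) s :=
    Real.continuousAt_rpow_const _ _ (Or.inl h.1.ne')
  exact ((hfc.const_mul _).sub (c1.const_mul _)).add ((c3.const_mul _).mul c2)

lemma psi_hasDeriv (ha₁ : 0 < a₁) (hd : 0 < d) (hα : 1 < α) (hβ : 1 < β) {s : ℝ}
    (h : s ∈ Dset a₁ b₁ p) :
    HasDerivAt (fun x => eFun a₁ a₂ b₁ b₂ d p α β x (fc a₁ b₁ d p α β x))
      (Pc a₁ a₂ b₁ b₂ d p α β s * fdv a₁ b₁ d p α β s) s := by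
  have hs := h.1
  have hf := fc_hasDeriv (β := β) ha₁ hd hα h
  have hfcpos := fc_pos (β := β) ha₁ hd hα h
  set f := fc a₁ b₁ d p α β
  set f' := fdv a₁ b₁ d p α β s
  have h1 : HasDerivAt (fun x : ℝ => x ^ p) (p * s ^ (p - 1)) s :=
    Real.hasDerivAt_rpow_const (Or.inl hs.ne')
  have h2 : HasDerivAt (fun x : ℝ => x ^ α) (α * s ^ (α - 1)) s :=
    Real.hasDerivAt_rpow_const (Or.inl hs.ne')
  have h3 : HasDerivAt (fun x : ℝ => x ^ (2:ℕ)) (2 * s) s := by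
    simpa using (hasDerivAt_pow 2 s)
  have h4 : HasDerivAt (fun x => f x ^ (2:ℕ)) (2 * f s * f') s := by
    simpa [Pi.pow_def] using hf.pow 2
  have h5 : HasDerivAt (fun x => f x ^ p) (f' * p * f s ^ (p - 1)) s :=
    hf.rpow_const (Or.inl hfcpos.ne')
  have h6 : HasDerivAt (fun x => f x ^ β) (f' * β * f s ^ (β - 1)) s :=
    hf.rpow_const (Or.inl hfcpos.ne')
  have htot := (((((h3.const_mul a₁).add (h4.const_mul a₂)).sub
      (h1.const_mul b₁)).sub (h5.const_mul b₂)).add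
      (((h2.const_mul d)).mul h6))
  have heq : (fun x => eFun a₁ a₂ b₁ b₂ d p α β x (f x))
      = fun x => a₁ * x ^ (2:ℕ) + a₂ * f x ^ (2:ℕ) - b₁ * x ^ p - b₂ * f x ^ p
          + d * x ^ α * f x ^ β := by
    funext x; rfl
  rw [heq]
  refine htot.congr_deriv ?_
  have hcurve := curve_eq (β := β) ha₁ hd hα hβ h
  unfold Pc
  linear_combination hcurve

end Aux2

section Aux3
variable {a₁ a₂ b₁ b₂ d p α β : ℝ}

/-- If `Φ ≥ 0` just to the right of a critical point, the strict-local-max property fails. -/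
lemma right_neg (ha₁ : 0 < a₁) (hb₁ : 0 < b₁) (hd : 0 < d) (hp : 2 < p) (hα : 1 < α)
    (hβ : 1 < β) (hαβ : α + β = p) {z b : ℝ} (hz : z ∈ Dset a₁ b₁ p) (hzb : z < b)
    {ε : ℝ} (hε : 0 < ε)
    (hstr : ∀ s' t' : ℝ, 0 < s' → 0 < t' → |s' - z| < ε → |t' - fc a₁ b₁ d p α β z| < ε →
      (s', t') ≠ (z, fc a₁ b₁ d p α β z) →
      eFun a₁ a₂ b₁ b₂ d p α β s' t' < eFun a₁ a₂ b₁ b₂ d p α β z (fc a₁ b₁ d p α β z)) :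
    ∃ x, x ∈ Ioo z b ∧ Pc a₁ a₂ b₁ b₂ d p α β x < 0 := by
  by_contra hcon
  push_neg at hcon
  have hc := (fc_hasDeriv (β := β) ha₁ hd hα hz).continuousAt
  rw [Metric.continuousAt_iff] at hc
  obtain ⟨δ, hδ, hδ2⟩ := hc ε hε
  have hmin : 0 < min (b - z) (min ε δ) := lt_min (by linarith) (lt_min hε hδ)
  set c := z + min (b - z) (min ε δ) / 2 with hc_def
  have h1 : min (b - z) (min ε δ) ≤ b - z := min_le_left _ _
  have h2 : min (b - z) (min ε δ) ≤ ε := (min_le_right _ _).trans (min_le_left _ _)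
  have h3 : min (b - z) (min ε δ) ≤ δ := (min_le_right _ _).trans (min_le_right _ _)
  have hzc : z < c := by rw [hc_def]; linarith
  have hcb : c < b := by rw [hc_def]; linarith
  have hce : |c - z| < ε := by rw [hc_def]; rw [abs_of_pos (by linarith)]; linarith
  have hcδ : dist c z < δ := by
    rw [Real.dist_eq, hc_def, abs_of_pos (by linarith)]; linarith
  have hIccD : Icc z c ⊆ Dset a₁ b₁ p := fun x hx => mem_D_upward ha₁ hb₁ hp hz hx.1
  set ψ := fun x => eFun a₁ a₂ b₁ b₂ d p α β x (fc a₁ b₁ d p α β x) with hψ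
  have hmono : MonotoneOn ψ (Icc z c) := by
    apply monotoneOn_of_deriv_nonneg (convex_Icc _ _)
    · exact fun x hx => ((psi_hasDeriv ha₁ hd hα hβ (hIccD hx)).continuousAt).continuousWithinAt
    · rw [interior_Icc]
      exact fun x hx =>
        ((psi_hasDeriv ha₁ hd hα hβ (hIccD (Ioo_subset_Icc_self hx))).differentiableAt).differentiableWithinAt
    · rw [interior_Icc]
      intro x hx
      have hxD := hIccD (Ioo_subset_Icc_self hx)
      rw [(psi_hasDeriv ha₁ hd hα hβ hxD).deriv]
      exact mul_nonneg (hcon x ⟨hx.1, lt_trans hx.2 hcb⟩)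
        (fdv_pos ha₁ hb₁ hd hp hα hβ hαβ hxD).le
  have hle : ψ z ≤ ψ c := hmono ⟨le_refl z, hzc.le⟩ ⟨hzc.le, le_refl c⟩ hzc.le
  have hcD : c ∈ Dset a₁ b₁ p := hIccD ⟨hzc.le, le_refl c⟩
  have hfcc : |fc a₁ b₁ d p α β c - fc a₁ b₁ d p α β z| < ε := by
    have := hδ2 hcδ
    rwa [Real.dist_eq] at this
  have hne : (c, fc a₁ b₁ d p α β c) ≠ (z, fc a₁ b₁ d p α β z) := by
    intro hEq; rw [Prod.mk.injEq] at hEq; exact hzc.ne' hEq.1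
  have hlt := hstr c (fc a₁ b₁ d p α β c) (lt_trans hz.1 hzc)
    (fc_pos ha₁ hd hα hcD) hce hfcc hne
  rw [hψ] at hle
  simp only at hle
  linarith
end Aux3

section Aux4
variable {a₁ a₂ b₁ b₂ d p α β : ℝ}

/-- If `Φ ≤ 0` just to the left of a critical point, the strict-local-max property fails. -/
lemma left_pos (ha₁ : 0 < a₁) (hb₁ : 0 < b₁) (hd : 0 < d) (hp : 2 < p) (hα : 1 < α)
    (hβ : 1 < β) (hαβ : α + β = p) {u z : ℝ} (hu : u ∈ Dset a₁ b₁ p) (huz : u < z)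
    {ε : ℝ} (hε : 0 < ε)
    (hstr : ∀ s' t' : ℝ, 0 < s' → 0 < t' → |s' - z| < ε → |t' - fc a₁ b₁ d p α β z| < ε →
      (s', t') ≠ (z, fc a₁ b₁ d p α β z) →
      eFun a₁ a₂ b₁ b₂ d p α β s' t' < eFun a₁ a₂ b₁ b₂ d p α β z (fc a₁ b₁ d p α β z)) :
    ∃ x, x ∈ Ioo u z ∧ 0 < Pc a₁ a₂ b₁ b₂ d p α β x := by
  by_contra hcon
  push_neg at hcon
  have hzD : z ∈ Dset a₁ b₁ p := mem_D_upward ha₁ hb₁ hp hu huz.le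
  have hc := (fc_hasDeriv (β := β) ha₁ hd hα hzD).continuousAt
  rw [Metric.continuousAt_iff] at hc
  obtain ⟨δ, hδ, hδ2⟩ := hc ε hε
  have hmin : 0 < min (z - u) (min ε δ) := lt_min (by linarith) (lt_min hε hδ)
  set c := z - min (z - u) (min ε δ) / 2 with hc_def
  have h1 : min (z - u) (min ε δ) ≤ z - u := min_le_left _ _
  have h2 : min (z - u) (min ε δ) ≤ ε := (min_le_right _ _).trans (min_le_left _ _)
  have h3 : min (z - u) (min ε δ) ≤ δ := (min_le_right _ _).trans (min_le_right _ _)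
  have hcz : c < z := by rw [hc_def]; linarith
  have huc : u < c := by rw [hc_def]; linarith
  have hce : |c - z| < ε := by rw [hc_def, abs_of_neg (by linarith)]; linarith
  have hcδ : dist c z < δ := by
    rw [Real.dist_eq, hc_def, abs_of_neg (by linarith)]; linarith
  have hcD : c ∈ Dset a₁ b₁ p := mem_D_upward ha₁ hb₁ hp hu huc.le
  have hIccD : Icc c z ⊆ Dset a₁ b₁ p := fun x hx => mem_D_upward ha₁ hb₁ hp hcD hx.1
  set ψ := fun x => eFun a₁ a₂ b₁ b₂ d p α β x (fc a₁ b₁ d p α β x) with hψ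
  have hanti : AntitoneOn ψ (Icc c z) := by
    apply antitoneOn_of_deriv_nonpos (convex_Icc _ _)
    · exact fun x hx => ((psi_hasDeriv ha₁ hd hα hβ (hIccD hx)).continuousAt).continuousWithinAt
    · rw [interior_Icc]
      exact fun x hx =>
        ((psi_hasDeriv ha₁ hd hα hβ (hIccD (Ioo_subset_Icc_self hx))).differentiableAt).differentiableWithinAt
    · rw [interior_Icc]
      intro x hx
      have hxD := hIccD (Ioo_subset_Icc_self hx)
      rw [(psi_hasDeriv ha₁ hd hα hβ hxD).deriv]
      exact mul_nonpos_iff.2 (Or.inr ⟨hcon x ⟨lt_trans huc hx.1, hx.2⟩,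
        (fdv_pos ha₁ hb₁ hd hp hα hβ hαβ hxD).le⟩)
  have hle : ψ z ≤ ψ c := hanti ⟨le_refl c, hcz.le⟩ ⟨hcz.le, le_refl z⟩ hcz.le
  have hfcc : |fc a₁ b₁ d p α β c - fc a₁ b₁ d p α β z| < ε := by
    have := hδ2 hcδ
    rwa [Real.dist_eq] at this
  have hne : (c, fc a₁ b₁ d p α β c) ≠ (z, fc a₁ b₁ d p α β z) := by
    intro hEq; rw [Prod.mk.injEq] at hEq; exact hcz.ne hEq.1
  have hlt := hstr c (fc a₁ b₁ d p α β c) hcD.1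
    (fc_pos ha₁ hd hα hcD) hce hfcc hne
  rw [hψ] at hle
  simp only at hle
  linarith

end Aux4

section Aux5
variable {a₁ a₂ b₁ b₂ d p α β : ℝ}

/-- Two distinct zeros of `Φ` are impossible when all critical points are strict local maxima. -/
lemma lemA2_no_two_zeros (ha₁ : 0 < a₁) (hb₁ : 0 < b₁) (hd : 0 < d) (hp : 2 < p) (hα : 1 < α)
    (hβ : 1 < β) (hαβ : α + β = p)
    (hmax : ∀ s t : ℝ, 0 < s → 0 < t →
      eFunDS a₁ a₂ b₁ b₂ d p α β s t = 0 → eFunDT a₁ a₂ b₁ b₂ d p α β s t = 0 →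
      ∃ ε > 0, ∀ s' t' : ℝ, 0 < s' → 0 < t' → |s' - s| < ε → |t' - t| < ε →
        (s', t') ≠ (s, t) →
        eFun a₁ a₂ b₁ b₂ d p α β s' t' < eFun a₁ a₂ b₁ b₂ d p α β s t)
    {u v : ℝ} (hu : u ∈ Dset a₁ b₁ p) (hv : v ∈ Dset a₁ b₁ p) (huv : u < v)
    (hPu : Pc a₁ a₂ b₁ b₂ d p α β u = 0) (hPv : Pc a₁ a₂ b₁ b₂ d p α β v = 0) : False := by
  set Φ := Pc a₁ a₂ b₁ b₂ d p α β with hΦ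
  -- u is a critical point, hence a strict local max
  obtain ⟨ε, hε, hstr⟩ := hmax u (fc a₁ b₁ d p α β u) hu.1 (fc_pos ha₁ hd hα hu)
    (dS_zero ha₁ hd hα hβ hu) (by rw [Pc_eq_dT ha₁ hd hα hu]; exact hPu)
  obtain ⟨x₀, hx₀, hx₀neg⟩ := right_neg ha₁ hb₁ hd hp hα hβ hαβ hu huv hε hstr
  have hx₀D : x₀ ∈ Dset a₁ b₁ p := mem_D_upward ha₁ hb₁ hp hu hx₀.1.le
  have hIccD : Icc x₀ v ⊆ Dset a₁ b₁ p := fun y hy => mem_D_upward ha₁ hb₁ hp hx₀D hy.1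
  have hcont : ContinuousOn Φ (Icc x₀ v) :=
    fun y hy => (Pc_contAt ha₁ hd hα (hIccD hy)).continuousWithinAt
  set Z := Icc x₀ v ∩ Φ ⁻¹' {0} with hZ
  have hZclosed : IsClosed Z :=
    hcont.preimage_isClosed_of_isClosed isClosed_Icc isClosed_singleton
  have hZne : Z.Nonempty := ⟨v, ⟨hx₀.2.le, le_refl v⟩, by simpa using hPv⟩
  have hbdd : BddBelow Z := ⟨x₀, fun y hy => hy.1.1⟩
  set w := sInf Z with hw
  have hwZ : w ∈ Z := hZclosed.csInf_mem hZne hbdd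
  have hwIcc : w ∈ Icc x₀ v := hwZ.1
  have hPw : Φ w = 0 := hwZ.2
  have hx₀w : x₀ < w := by
    rcases lt_or_eq_of_le hwIcc.1 with h | h
    · exact h
    · exfalso; rw [← h] at hPw; exact hx₀neg.ne hPw
  have hwD : w ∈ Dset a₁ b₁ p := hIccD hwIcc
  have hneg : ∀ y, y ∈ Ico x₀ w → Φ y < 0 := by
    intro y hy
    rcases lt_trichotomy (Φ y) 0 with h | h | h
    · exact h
    · exfalso
      have hyZ : y ∈ Z := ⟨⟨hy.1, hy.2.le.trans hwIcc.2⟩, by simpa using h⟩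
      exact absurd (csInf_le hbdd hyZ) (not_le.2 hy.2)
    · exfalso
      have hsub : Icc x₀ y ⊆ Icc x₀ v :=
        Icc_subset_Icc (le_refl x₀) (hy.2.le.trans hwIcc.2)
      have hmem : (0:ℝ) ∈ Icc (Φ x₀) (Φ y) := ⟨hx₀neg.le, h.le⟩
      obtain ⟨y', hy', hPy'⟩ := intermediate_value_Icc hy.1 (hcont.mono hsub) hmem
      have hy'Z : y' ∈ Z := ⟨⟨hy'.1, hy'.2.trans (hy.2.le.trans hwIcc.2)⟩, by simpa using hPy'⟩
      have : w ≤ y' := csInf_le hbdd hy'Z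
      have : y' < w := lt_of_le_of_lt hy'.2 hy.2
      linarith
  obtain ⟨ε', hε', hstr'⟩ := hmax w (fc a₁ b₁ d p α β w) hwD.1 (fc_pos ha₁ hd hα hwD)
    (dS_zero ha₁ hd hα hβ hwD) (by rw [Pc_eq_dT ha₁ hd hα hwD]; exact hPw)
  obtain ⟨x₁, hx₁, hx₁pos⟩ := left_pos ha₁ hb₁ hd hp hα hβ hαβ hx₀D hx₀w hε' hstr'
  exact absurd hx₁pos (not_lt.2 (hneg x₁ ⟨hx₁.1.le, hx₁.2⟩).le)

end Aux5

section Aux6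
variable {a₁ a₂ b₁ b₂ d p α β : ℝ}

/-- The global bound: by Young's and Bernoulli's inequalities. -/
lemma lemA2_global_bound (ha₁ : 0 < a₁) (ha₂ : 0 < a₂) (hd : 0 < d)
    (hp : 2 < p) (hα : 1 < α) (hβ : 1 < β) (hαβ : α + β = p)
    (hid1 : p * b₁ = 2 * a₁ + d * α) (hid2 : p * b₂ = 2 * a₂ + d * β)
    {s t : ℝ} (hs : 0 < s) (ht : 0 < t) :
    eFun a₁ a₂ b₁ b₂ d p α β s t ≤ a₁ + a₂ - b₁ - b₂ + d := by
  unfold eFun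
  have hp0 : (0:ℝ) < p := by linarith
  have hw : α / p + β / p = 1 := by field_simp; linarith
  have young : p * (s ^ α * t ^ β) ≤ α * s ^ p + β * t ^ p := by
    have h := Real.geom_mean_le_arith_mean2_weighted
      (w₁ := α / p) (w₂ := β / p) (p₁ := s ^ p) (p₂ := t ^ p)
      (div_nonneg (by linarith) hp0.le) (div_nonneg (by linarith) hp0.le)
      (Real.rpow_nonneg hs.le p) (Real.rpow_nonneg ht.le p) hw
    have e1 : (s ^ p) ^ (α / p) = s ^ α := by
      rw [← Real.rpow_mul hs.le]; congr 1; field_simp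
    have e2 : (t ^ p) ^ (β / p) = t ^ β := by
      rw [← Real.rpow_mul ht.le]; congr 1; field_simp
    rw [e1, e2] at h
    calc p * (s ^ α * t ^ β) ≤ p * (α / p * s ^ p + β / p * t ^ p) := by nlinarith
      _ = α * s ^ p + β * t ^ p := by field_simp
  have bern : ∀ u : ℝ, 0 < u → 2 + p * (u ^ 2 - 1) ≤ 2 * u ^ p := by
    intro u hu
    have h := one_add_mul_self_le_rpow_one_add (s := u ^ 2 - 1)
      (by nlinarith [sq_nonneg u]) (p := p / 2) (by linarith)
    have e3 : (1 + (u ^ 2 - 1) : ℝ) ^ (p / 2) = u ^ p := by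
      have h4 : (1 + (u ^ 2 - 1) : ℝ) = u ^ ((2:ℕ) : ℝ) := by
        rw [Real.rpow_natCast]; ring
      rw [h4, ← Real.rpow_mul hu.le]
      congr 1; ring
    rw [e3] at h
    linarith
  have F1 := mul_le_mul_of_nonneg_left young hd.le
  have F2 := mul_le_mul_of_nonneg_left (bern s hs) ha₁.le
  have F3 := mul_le_mul_of_nonneg_left (bern t ht) ha₂.le
  have E4 : d * α + d * β = d * p := by rw [← hαβ]; ring
  have E1 : p * b₁ * s ^ p = (2 * a₁ + d * α) * s ^ p := by rw [hid1]
  have E2 : p * b₂ * t ^ p = (2 * a₂ + d * β) * t ^ p := by rw [hid2]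
  nlinarith [F1, F2, F3, E4, E1, E2, hid1, hid2, hp0]

end Aux6


/-- Lemma A.2 of the appendix. If every critical point of `e` in
`V = (0,∞)×(0,∞)` is a strict local maximum, then `(1,1)` is the only critical
point of `e` in `V` and it is a global maximum. -/
theorem statement4 (a₁ a₂ b₁ b₂ d p α β : ℝ)
    (ha₁ : 0 < a₁) (ha₂ : 0 < a₂) (hb₁ : 0 < b₁) (hb₂ : 0 < b₂) (hd : 0 < d)
    (hp : 2 < p) (hα : 1 < α) (hβ : 1 < β) (hαβ : α + β = p)
    (hcritS : eFunDS a₁ a₂ b₁ b₂ d p α β 1 1 = 0)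
    (hcritT : eFunDT a₁ a₂ b₁ b₂ d p α β 1 1 = 0)
    (hmax : ∀ s t : ℝ, 0 < s → 0 < t →
      eFunDS a₁ a₂ b₁ b₂ d p α β s t = 0 → eFunDT a₁ a₂ b₁ b₂ d p α β s t = 0 →
      ∃ ε > 0, ∀ s' t' : ℝ, 0 < s' → 0 < t' → |s' - s| < ε → |t' - t| < ε →
        (s', t') ≠ (s, t) →
        eFun a₁ a₂ b₁ b₂ d p α β s' t' < eFun a₁ a₂ b₁ b₂ d p α β s t) :
    (∀ s t : ℝ, 0 < s → 0 < t →
      eFunDS a₁ a₂ b₁ b₂ d p α β s t = 0 → eFunDT a₁ a₂ b₁ b₂ d p α β s t = 0 →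
      s = 1 ∧ t = 1) ∧
    (∀ s t : ℝ, 0 < s → 0 < t →
      eFun a₁ a₂ b₁ b₂ d p α β s t ≤ eFun a₁ a₂ b₁ b₂ d p α β 1 1) := by
  -- extract the identities coming from criticality at (1,1)
  have hS11 := hcritS
  rw [dsFormula a₁ a₂ b₁ b₂ d p α β one_pos (1:ℝ)] at hS11
  simp only [Real.one_rpow, mul_one] at hS11
  have hid1 : p * b₁ = 2 * a₁ + d * α := by linarith
  have hT11 := hcritT
  rw [dtFormula a₁ a₂ b₁ b₂ d p α β (1:ℝ) one_pos] at hT11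
  simp only [Real.one_rpow, mul_one] at hT11
  have hid2 : p * b₂ = 2 * a₂ + d * β := by linarith
  have e11 : eFun a₁ a₂ b₁ b₂ d p α β 1 1 = a₁ + a₂ - b₁ - b₂ + d := by
    unfold eFun; simp [Real.one_rpow]
  -- facts about s = 1 on the curve
  have h1D : (1:ℝ) ∈ Dset a₁ b₁ p := by
    refine ⟨one_pos, ?_⟩
    rw [Real.one_rpow, mul_one]
    nlinarith [mul_pos hd (show (0:ℝ) < α by linarith)]
  have hF1 : Fc a₁ b₁ d p α 1 = 1 := by
    unfold Fc
    rw [Real.one_rpow, Real.one_rpow]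
    have hda : d * α ≠ 0 := by positivity
    field_simp
    linarith
  have hfc1 : fc a₁ b₁ d p α β 1 = 1 := by
    unfold fc; rw [hF1, Real.one_rpow]
  have hP1 : Pc a₁ a₂ b₁ b₂ d p α β 1 = 0 := by
    rw [← Pc_eq_dT ha₁ hd hα h1D, hfc1]; exact hcritT
  constructor
  · intro s t hs ht hS hT
    obtain ⟨hsD, htEq⟩ := crit_mem ha₁ hb₁ hd hp hα hβ hs ht hS
    subst htEq
    have hPs : Pc a₁ a₂ b₁ b₂ d p α β s = 0 := by
      rw [← Pc_eq_dT ha₁ hd hα hsD]; exact hT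
    have hs1 : s = 1 := by
      by_contra hne
      rcases lt_or_gt_of_ne hne with hlt | hgt
      · exact lemA2_no_two_zeros ha₁ hb₁ hd hp hα hβ hαβ hmax hsD h1D hlt hPs hP1
      · exact lemA2_no_two_zeros ha₁ hb₁ hd hp hα hβ hαβ hmax h1D hsD hgt hP1 hPs
    subst hs1
    exact ⟨rfl, hfc1⟩
  · intro s t hs ht
    rw [e11]
    exact lemA2_global_bound ha₁ ha₂ hd hp hα hβ hαβ hid1 hid2 hs ht
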